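/- Let E : Fin N × Fin D → Fin M be a (K, ε)-extractor with K an integer, 0 < K ≤ N, and let S be a set of left vertices with #S ≤ K. Then the number of elements of S that are dangerous in S is less than 2εK. -/

import Mathlib

open Finset

def edgeCount {N D M : ℕ} (E : Fin N × Fin D → Fin M)
    (S : Finset (Fin N)) (Y : Finset (Fin M)) : ℕ :=
  ((S ×ˢ (univ : Finset (Fin D))).filter (fun p => E p ∈ Y)).card

def IsExtractor {N D M : ℕ} (E : Fin N × Fin D → Fin M) (K : ℕ) (ε : ℝ) : Prop :=
  ∀ (S : Finset (Fin N)) (Y : Finset (Fin M)), K ≤ S.card →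
    |(edgeCount E S Y : ℝ) / (D * S.card) - (Y.card : ℝ) / M| < ε

def BadFor {N D M : ℕ} (E : Fin N × Fin D → Fin M) (K : ℕ)
    (S : Finset (Fin N)) (z : Fin M) : Prop :=
  (2 * D * K : ℝ) / M <
    (((S ×ˢ (univ : Finset (Fin D))).filter (fun p => E p = z)).card : ℝ)

def DangerousIn {N D M : ℕ} (E : Fin N × Fin D → Fin M) (K : ℕ)
    (S : Finset (Fin N)) (x : Fin N) : Prop :=
  ∀ i : Fin D, BadFor E K S (E (x, i))

theorem card_dangerous_lt {N D M : ℕ} (E : Fin N × Fin D → Fin M)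
    (K : ℕ) (ε : ℝ) (hK : 0 < K) (hKN : K ≤ N) (hD : 0 < D) (hM : 0 < M)
    (hext : IsExtractor E K ε)
    (S : Finset (Fin N)) (hS : S.card ≤ K) :
    (({x : Fin N | x ∈ S ∧ DangerousIn E K S x}.ncard : ℝ)) < 2 * ε * K := by
  classical
  set T : Finset (Fin N) := S.filter (fun x => DangerousIn E K S x) with hT
  have hset : {x : Fin N | x ∈ S ∧ DangerousIn E K S x} = ↑T := by
    ext x; simp [hT]
  rw [hset, Set.ncard_coe_finset]
  set B : Finset (Fin M) := univ.filter (fun z => BadFor E K S z) with hB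
  have hKN' : K ≤ Fintype.card (Fin N) := by simpa using hKN
  obtain ⟨S', hSS', hS'⟩ := S.exists_superset_card_eq hS hKN'
  obtain ⟨S'', hTS'', hS''⟩ := T.exists_superset_card_eq
    (le_trans (Finset.card_filter_le _ _) hS) hKN'
  have hDK : (0:ℝ) < (D:ℝ) * K := by positivity
  have hm : (0:ℝ) < (M:ℝ) := by exact_mod_cast hM
  -- ε > 0
  have hε : 0 < ε := by
    have h := hext S' ∅ (by rw [hS'])
    have he : edgeCount E S' ∅ = 0 := by simp [edgeCount]
    simpa [he] using h
  -- lower bound on edges from S into B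
  have hfib : edgeCount E S B
      = ∑ z ∈ B, ((S ×ˢ (univ : Finset (Fin D))).filter (fun p => E p = z)).card := by
    rw [edgeCount, Finset.card_eq_sum_card_fiberwise
      (f := E) (t := B) (s := (S ×ˢ (univ : Finset (Fin D))).filter (fun p => E p ∈ B)) (fun p hp => (Finset.mem_filter.mp hp).2)]
    refine Finset.sum_congr rfl (fun z hz => ?_)
    rw [Finset.filter_filter]
    congr 1
    refine Finset.filter_congr (fun p _ => ?_)
    exact ⟨fun h => h.2, fun h => ⟨h ▸ hz, h⟩⟩
  have h1 : (2*(D:ℝ)*K)/M * B.card ≤ (edgeCount E S B : ℝ) := by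
    calc (2*(D:ℝ)*K)/M * B.card = ∑ _z ∈ B, (2*(D:ℝ)*K)/M := by
          rw [Finset.sum_const, nsmul_eq_mul]; ring
      _ ≤ ∑ z ∈ B, (((S ×ˢ (univ : Finset (Fin D))).filter (fun p => E p = z)).card : ℝ) :=
          Finset.sum_le_sum (fun z hz => le_of_lt ((Finset.mem_filter.mp hz).2))
      _ = (edgeCount E S B : ℝ) := by rw [hfib]; push_cast; ring
  have h2 : (edgeCount E S B : ℝ) ≤ (edgeCount E S' B : ℝ) := by
    have : edgeCount E S B ≤ edgeCount E S' B :=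
      Finset.card_le_card (Finset.filter_subset_filter _
        (Finset.product_subset_product_left hSS'))
    exact_mod_cast this
  have h3 : (edgeCount E S' B : ℝ) / ((D:ℝ) * K) < (B.card : ℝ)/M + ε := by
    have h := hext S' B (by rw [hS'])
    rw [hS'] at h
    have := (abs_lt.mp h).2
    linarith
  have hBM : (B.card : ℝ)/M < ε := by
    have h3' : (edgeCount E S' B : ℝ) < ((B.card : ℝ)/M + ε) * ((D:ℝ)*K) :=
      (div_lt_iff₀ hDK).mp h3
    have key : (2*(D:ℝ)*K)/M * B.card < ((B.card : ℝ)/M + ε) * ((D:ℝ)*K) := by linarith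
    by_contra hc
    push_neg at hc
    have hmul := mul_le_mul_of_nonneg_right hc hDK.le
    have e1 : (2*(D:ℝ)*K)/M * B.card = 2 * ((B.card:ℝ)/M) * ((D:ℝ)*K) := by ring
    rw [e1] at key
    linarith
  -- dangerous vertices
  have h4 : ((T.card * D : ℕ) : ℝ) ≤ (edgeCount E S'' B : ℝ) := by
    have : T.card * D ≤ edgeCount E S'' B := by
      rw [edgeCount]
      calc T.card * D = (T ×ˢ (univ : Finset (Fin D))).card := by
            rw [Finset.card_product, Finset.card_univ, Fintype.card_fin]
        _ ≤ _ := Finset.card_le_card (by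
            intro p hp
            obtain ⟨hx, -⟩ := Finset.mem_product.mp hp
            refine Finset.mem_filter.mpr
              ⟨Finset.mem_product.mpr ⟨hTS'' hx, Finset.mem_univ _⟩, ?_⟩
            have hd : DangerousIn E K S p.1 := (Finset.mem_filter.mp hx).2
            exact Finset.mem_filter.mpr ⟨Finset.mem_univ _, hd p.2⟩)
    exact_mod_cast this
  have h5 : (edgeCount E S'' B : ℝ) / ((D:ℝ) * K) < (B.card : ℝ)/M + ε := by
    have h := hext S'' B (by rw [hS''])
    rw [hS''] at h
    have := (abs_lt.mp h).2
    linarith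
  have h5' : (edgeCount E S'' B : ℝ) < ((B.card : ℝ)/M + ε) * ((D:ℝ)*K) :=
    (div_lt_iff₀ hDK).mp h5
  have hD' : (0:ℝ) < (D:ℝ) := by exact_mod_cast hD
  have hK' : (0:ℝ) < (K:ℝ) := by exact_mod_cast hK
  push_cast at h4
  have h6 : ((B.card : ℝ)/M + ε) * ((D:ℝ)*K) < (2*ε) * ((D:ℝ)*K) := by
    apply mul_lt_mul_of_pos_right _ hDK
    linarith
  by_contra hc
  push_neg at hc
  have hmul := mul_le_mul_of_nonneg_right hc hD'.le
  have e2 : 2 * ε * (K:ℝ) * D = 2 * ε * ((D:ℝ)*K) := by ring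
  rw [e2] at hmul
  linarith
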